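/- Let O_k be the set of odd integers that are at least 3 and less than 2k+1, and let A be a set of integers each at least 3 with 2k+1 ∉ A. Then ex(n, C_{2k+1}, 𝒞_A) ≥ (1/(2k+1)^{2k}) · ex(n, C_{2k+1}, 𝒞_{A∖O_k}). -/

import Mathlib

open SimpleGraph

/-- The number of copies of a graph `H` in `G`: subgraphs of `G` isomorphic to `H`. -/
noncomputable def copyCount {α β : Type*} (H : SimpleGraph α) (G : SimpleGraph β) : ℕ :=
  Nat.card {G' : G.Subgraph // Nonempty (H ≃g G'.coe)}

/-- `G` contains no cycle of length `m`. -/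
def CycleFreeOf {β : Type*} (G : SimpleGraph β) (m : ℕ) : Prop :=
  ∀ (v : β) (w : G.Walk v v), w.IsCycle → w.length ≠ m

/-- `ex(n, C_m, 𝒞_A)`. -/
noncomputable def exFam (n m : ℕ) (A : Set ℕ) : ℕ :=
  sSup {c | ∃ G : SimpleGraph (Fin n),
    (∀ a ∈ A, CycleFreeOf G a) ∧ c = _root_.copyCount (cycleGraph m) G}

/- ### Auxiliary material -/

lemma aux_finite_subgraph {β : Type*} [Finite β] (G : SimpleGraph β) : Finite G.Subgraph := by
  apply Finite.of_injective (fun S => (S.verts, S.Adj))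
  intro S T h
  ext <;> simp_all [Prod.ext_iff]

/-- A uniform upper bound for `copyCount` over graphs on `Fin n`. -/
lemma aux_copyCount_le {α : Type*} (H : SimpleGraph α) (n : ℕ) (G : SimpleGraph (Fin n)) :
    copyCount H G ≤ Nat.card (Set (Fin n) × (Fin n → Fin n → Prop)) := by
  haveI := aux_finite_subgraph G
  have h1 : copyCount H G ≤ Nat.card G.Subgraph :=
    Nat.card_le_card_of_injective Subtype.val Subtype.val_injective
  refine h1.trans (Nat.card_le_card_of_injective (fun S => (S.verts, S.Adj)) ?_)
  intro S T h
  ext <;> simp_all [Prod.ext_iff]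

lemma aux_bddAbove (n m : ℕ) (A : Set ℕ) :
    BddAbove {c | ∃ G : SimpleGraph (Fin n),
      (∀ a ∈ A, CycleFreeOf G a) ∧ c = _root_.copyCount (cycleGraph m) G} := by
  refine ⟨Nat.card (Set (Fin n) × (Fin n → Fin n → Prop)), ?_⟩
  rintro c ⟨G, -, rfl⟩
  exact aux_copyCount_le _ n G

lemma aux_le_exFam {n m : ℕ} {A : Set ℕ} (G : SimpleGraph (Fin n))
    (hG : ∀ a ∈ A, CycleFreeOf G a) : _root_.copyCount (cycleGraph m) G ≤ exFam n m A :=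
  le_csSup (aux_bddAbove n m A) ⟨G, hG, rfl⟩

/-- The layered graph induced by a colouring `f`. -/
def layer {n m : ℕ} (f : Fin n → ZMod m) : SimpleGraph (Fin n) :=
  SimpleGraph.fromRel (fun u v => f u - f v = 1)

lemma layer_adj {n m : ℕ} (f : Fin n → ZMod m) {u v : Fin n} (h : (layer f).Adj u v) :
    f u - f v = 1 ∨ f v - f u = 1 := by
  rcases (SimpleGraph.fromRel_adj _ u v).1 h with ⟨-, h | h⟩
  · exact Or.inl h
  · exact Or.inr h

lemma layer_adj' {n m : ℕ} (f : Fin n → ZMod m) {u v : Fin n} (hne : u ≠ v)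
    (h : f u - f v = 1 ∨ f v - f u = 1) : (layer f).Adj u v :=
  (SimpleGraph.fromRel_adj _ u v).2 ⟨hne, h⟩

/-- Along a walk in the layered graph, the colour changes by `p - q` where `p + q` is the
length. -/
lemma layer_walk_sum {n m : ℕ} (f : Fin n → ZMod m) {u v : Fin n}
    (w : (layer f).Walk u v) :
    ∃ p q : ℕ, p + q = w.length ∧ f u + (p : ZMod m) = f v + (q : ZMod m) := by
  induction w with
  | nil => exact ⟨0, 0, rfl, rfl⟩
  | @cons a b c h w ih =>
    obtain ⟨p, q, hpq, he⟩ := ih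
    rcases layer_adj f h with h1 | h1
    · refine ⟨p, q + 1, by simp [Walk.length_cons]; omega, ?_⟩
      have : f a = f b + 1 := by rw [← h1]; ring
      push_cast
      linear_combination he + this
    · refine ⟨p + 1, q, by simp [Walk.length_cons]; omega, ?_⟩
      have : f b = f a + 1 := by rw [← h1]; ring
      push_cast
      linear_combination he - this

/-- The layered graph has no odd closed walks of length `< m`. -/
lemma layer_odd_closed {n m : ℕ} (f : Fin n → ZMod m) {v : Fin n}
    (w : (layer f).Walk v v) (hodd : Odd w.length) : m ≤ w.length := by
  obtain ⟨p, q, hpq, he⟩ := layer_walk_sum f w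
  have h0 : (p : ZMod m) = (q : ZMod m) := by
    have := add_left_cancel he
    exact this
  have hmod : p ≡ q [MOD m] := (ZMod.natCast_eq_natCast_iff _ _ _).1 h0
  have hne : p ≠ q := by
    rintro rfl
    rw [← hpq, Nat.odd_iff] at hodd
    omega
  rcases le_total p q with hle | hle
  · have hd : m ∣ q - p := (Nat.modEq_iff_dvd' hle).1 hmod
    have : m ≤ q - p := Nat.le_of_dvd (by omega) hd
    omega
  · have hd : m ∣ p - q := (Nat.modEq_iff_dvd' hle).1 hmod.symm
    have : m ≤ p - q := Nat.le_of_dvd (by omega) hd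
    omega

/-- `G ⊓ layer f` is `A`-free whenever `G` is `(A \ O_k)`-free. -/
lemma inf_layer_free {n k : ℕ} {A : Set ℕ}
    (G : SimpleGraph (Fin n))
    (hG : ∀ a ∈ A \ {a | Odd a ∧ 3 ≤ a ∧ a < 2 * k + 1}, CycleFreeOf G a)
    (hA : ∀ a ∈ A, 3 ≤ a)
    (f : Fin n → ZMod (2 * k + 1)) :
    ∀ a ∈ A, CycleFreeOf (G ⊓ layer f) a := by
  intro a ha v w hc hlen
  by_cases hO : Odd a ∧ 3 ≤ a ∧ a < 2 * k + 1
  · have hle : 2 * k + 1 ≤ (w.mapLe (inf_le_right : G ⊓ layer f ≤ layer f)).length :=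
      layer_odd_closed f _ (by rw [Walk.length_map, hlen]; exact hO.1)
    rw [Walk.length_map] at hle
    omega
  · exact hG a ⟨ha, hO⟩ v (w.mapLe inf_le_left) (Walk.IsCycle.mapLe inf_le_left hc)
      (by rw [Walk.length_map]; exact hlen)

/-- The colour of a cycle position, as an element of `ZMod m`. -/
def posColor {m : ℕ} (i : Fin m) : ZMod m := (i.val : ZMod m)

lemma posColor_sub {m : ℕ} [NeZero m] (a b : Fin m) :
    posColor a - posColor b = ((a - b).val : ZMod m) := by
  have h : (a - b).val = (m - b.val + a.val) % m := by
    rw [Fin.sub_def]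
  rw [posColor, posColor, h]
  have hb : b.val ≤ m := le_of_lt b.isLt
  push_cast [ZMod.natCast_mod, Nat.cast_sub hb]
  simp [ZMod.natCast_self]
  ring

lemma posColor_adj {m : ℕ} [NeZero m] {a b : Fin m} (h : (cycleGraph m).Adj a b) :
    posColor a - posColor b = 1 ∨ posColor b - posColor a = 1 := by
  rcases cycleGraph_adj'.1 h with h1 | h1
  · left; rw [posColor_sub, h1]; simp
  · right; rw [posColor_sub, h1]; simp


/-- Compatibility of a colouring with a subgraph: every edge of `S` is an edge of the
layered graph. -/
def auxCompat {n m : ℕ} (f : Fin n → ZMod m) {G : SimpleGraph (Fin n)} (S : G.Subgraph) : Prop :=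
  ∀ ⦃u v : Fin n⦄, S.Adj u v → (layer f).Adj u v

lemma aux_card_verts {n m : ℕ} {G : SimpleGraph (Fin n)} {S : G.Subgraph}
    (e : cycleGraph m ≃g S.coe) : Nat.card S.verts = m := by
  rw [Nat.card_congr e.toEquiv.symm, Nat.card_eq_fintype_card, Fintype.card_fin]

/-- Counting colourings compatible with a fixed copy of the cycle. -/
lemma aux_colorings {n k : ℕ} (hk : 1 ≤ k) (hn : 2 * k + 1 ≤ n) {G : SimpleGraph (Fin n)}
    (S : G.Subgraph) (e : cycleGraph (2 * k + 1) ≃g S.coe) :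
    (2 * k + 1) ^ (n - 2 * k) ≤ Nat.card {f : Fin n → ZMod (2 * k + 1) // auxCompat f S} := by
  classical
  haveI : NeZero (2 * k + 1) := ⟨by omega⟩
  set m := 2 * k + 1 with hm
  have hΦ : ∀ p : ZMod m × ((↥(S.vertsᶜ)) → ZMod m),
      auxCompat (fun v => if h : v ∈ S.verts then posColor (e.symm ⟨v, h⟩) + p.1
        else p.2 ⟨v, h⟩) S := by
    rintro ⟨c, g⟩ u v huv
    have hu : u ∈ S.verts := S.edge_vert huv
    have hv : v ∈ S.verts := S.edge_vert huv.symm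
    refine layer_adj' _ huv.ne ?_
    simp only [dif_pos hu, dif_pos hv, add_sub_add_right_eq_sub]
    exact posColor_adj (e.symm.map_adj_iff.2 (by simpa using huv))
  set Φ : ZMod m × ((↥(S.vertsᶜ)) → ZMod m) → {f : Fin n → ZMod m // auxCompat f S} :=
    fun p => ⟨fun v => if h : v ∈ S.verts then posColor (e.symm ⟨v, h⟩) + p.1
      else p.2 ⟨v, h⟩, hΦ p⟩ with hΦdef
  have hinj : Function.Injective Φ := by
    rintro ⟨c, g⟩ ⟨c', g'⟩ h
    rw [Subtype.ext_iff, funext_iff] at h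
    have hc : c = c' := by
      set v0 : ↥S.verts := e.toEquiv ⟨0, by omega⟩ with hv0
      have := h v0.1
      simp only [hΦdef, dif_pos v0.2] at this
      exact add_left_cancel this
    refine Prod.ext hc (funext fun x => ?_)
    have hx : x.1 ∉ S.verts := x.2
    have := h x.1
    simp only [hΦdef, dif_neg hx] at this
    simpa using this
  have hcard : Nat.card (ZMod m × ((↥(S.vertsᶜ)) → ZMod m)) = m ^ (n - 2 * k) := by
    rw [Nat.card_prod, Nat.card_fun, Nat.card_zmod]
    have h1 : Nat.card ↥(S.vertsᶜ) = n - m := by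
      have h2 := Set.ncard_add_ncard_compl S.verts
      have h3 : S.verts.ncard = m := by rw [← Nat.card_coe_set_eq]; exact aux_card_verts e
      rw [Nat.card_coe_set_eq]
      simp only [Nat.card_eq_fintype_card, Fintype.card_fin] at h2
      omega
    rw [h1, ← pow_succ']
    congr 1
    omega
  calc (2 * k + 1) ^ (n - 2 * k) = Nat.card (ZMod m × ((↥(S.vertsᶜ)) → ZMod m)) := hcard.symm
    _ ≤ _ := Nat.card_le_card_of_injective Φ hinj

/-- Copies of the cycle compatible with `f` inject into copies in `G ⊓ layer f`. -/
lemma aux_survivors {n m : ℕ} (G : SimpleGraph (Fin n)) (f : Fin n → ZMod m) :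
    Nat.card {S : G.Subgraph // Nonempty (cycleGraph m ≃g S.coe) ∧ auxCompat f S}
      ≤ _root_.copyCount (cycleGraph m) (G ⊓ layer f) := by
  haveI := aux_finite_subgraph (G ⊓ layer f)
  refine Nat.card_le_card_of_injective
    (fun P => (⟨⟨P.1.verts, P.1.Adj, fun h => ⟨P.1.adj_sub h, P.2.2 h⟩, P.1.edge_vert,
      P.1.symm⟩, P.2.1⟩ : {G' : (G ⊓ layer f).Subgraph // Nonempty (cycleGraph m ≃g G'.coe)}))
    ?_
  rintro ⟨S, hS⟩ ⟨T, hT⟩ h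
  simp only [Subtype.mk.injEq, Subgraph.mk.injEq] at h
  have h' := congrArg (fun x => x.1) h
  have hv := congrArg Subgraph.verts h'
  have ha := congrArg Subgraph.Adj h'
  exact Subtype.ext (show S = T from Subgraph.ext hv ha)

theorem stmt_7 (A : Set ℕ) (hA : ∀ a ∈ A, 3 ≤ a) (k n : ℕ) (hk : 1 ≤ k)
    (h2k1 : 2 * k + 1 ∉ A) :
    exFam n (2 * k + 1) (A \ {a | Odd a ∧ 3 ≤ a ∧ a < 2 * k + 1})
      ≤ (2 * k + 1) ^ (2 * k) * exFam n (2 * k + 1) A := by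
  classical
  have key : ∀ G : SimpleGraph (Fin n),
      (∀ a ∈ A \ {a | Odd a ∧ 3 ≤ a ∧ a < 2 * k + 1}, CycleFreeOf G a) →
      _root_.copyCount (cycleGraph (2 * k + 1)) G ≤ (2 * k + 1) ^ (2 * k) * exFam n (2 * k + 1) A := by
    intro G hG
    haveI : NeZero (2 * k + 1) := ⟨by omega⟩
    haveI : Finite G.Subgraph := aux_finite_subgraph G
    haveI : Fintype G.Subgraph := Fintype.ofFinite _
    by_cases hn : 2 * k + 1 ≤ n
    · -- the generic case
      set cops : Finset G.Subgraph :=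
        Finset.univ.filter (fun S => Nonempty (cycleGraph (2 * k + 1) ≃g S.coe)) with hcops
      have hcc : _root_.copyCount (cycleGraph (2 * k + 1)) G = cops.card := by
        rw [_root_.copyCount, Nat.card_eq_fintype_card, Fintype.card_subtype]
      -- lower bound on the double count
      have hlow : cops.card * (2 * k + 1) ^ (n - 2 * k) ≤
          ∑ S ∈ cops, (Finset.univ.filter (fun f : Fin n → ZMod (2 * k + 1) =>
            auxCompat f S)).card := by
        have := Finset.card_nsmul_le_sum cops
          (fun S => (Finset.univ.filter (fun f : Fin n → ZMod (2 * k + 1) =>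
            auxCompat f S)).card) ((2 * k + 1) ^ (n - 2 * k)) ?_
        · simpa [smul_eq_mul] using this
        · intro S hS
          obtain ⟨e⟩ := (Finset.mem_filter.1 hS).2
          have h1 := aux_colorings hk hn S e
          rwa [Nat.card_eq_fintype_card, Fintype.card_subtype] at h1
      -- the double count
      have hswap : ∑ S ∈ cops, (Finset.univ.filter (fun f : Fin n → ZMod (2 * k + 1) =>
            auxCompat f S)).card
          = ∑ f : Fin n → ZMod (2 * k + 1), (cops.filter (fun S => auxCompat f S)).card := by
        simp_rw [Finset.card_filter]
        exact Finset.sum_comm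
      -- upper bound on the double count
      have hup : ∀ f : Fin n → ZMod (2 * k + 1),
          (cops.filter (fun S => auxCompat f S)).card ≤ exFam n (2 * k + 1) A := by
        intro f
        have h1 : (cops.filter (fun S => auxCompat f S)).card
            = Nat.card {S : G.Subgraph //
                Nonempty (cycleGraph (2 * k + 1) ≃g S.coe) ∧ auxCompat f S} := by
          rw [Nat.card_eq_fintype_card, Fintype.card_subtype, hcops, Finset.filter_filter]
        rw [h1]
        exact (aux_survivors G f).trans
          (aux_le_exFam (G ⊓ layer f) (inf_layer_free G hG hA f))
      have hsum2 : ∑ f : Fin n → ZMod (2 * k + 1), (cops.filter (fun S => auxCompat f S)).card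
          ≤ (2 * k + 1) ^ n * exFam n (2 * k + 1) A := by
        calc ∑ f : Fin n → ZMod (2 * k + 1), (cops.filter (fun S => auxCompat f S)).card
            ≤ ∑ _f : Fin n → ZMod (2 * k + 1), exFam n (2 * k + 1) A :=
              Finset.sum_le_sum (fun f _ => hup f)
          _ = (2 * k + 1) ^ n * exFam n (2 * k + 1) A := by
              simp [Finset.sum_const, ZMod.card]
      have hmain : cops.card * (2 * k + 1) ^ (n - 2 * k) ≤
          ((2 * k + 1) ^ (2 * k) * exFam n (2 * k + 1) A) * (2 * k + 1) ^ (n - 2 * k) := by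
        refine (hlow.trans (hswap.le.trans hsum2)).trans (le_of_eq ?_)
        have : (2 * k + 1) ^ n = (2 * k + 1) ^ (2 * k) * (2 * k + 1) ^ (n - 2 * k) := by
          rw [← pow_add]
          congr 1
          omega
        rw [this]
        ring
      rw [hcc]
      exact Nat.le_of_mul_le_mul_right hmain (by positivity)
    · -- degenerate case: no copies at all
      have : _root_.copyCount (cycleGraph (2 * k + 1)) G = 0 := by
        rw [_root_.copyCount, Nat.card_eq_zero]
        left
        constructor
        rintro ⟨S, ⟨e⟩⟩
        have h1 : Nat.card S.verts = 2 * k + 1 := aux_card_verts e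
        have h2 : Nat.card S.verts ≤ n := by
          have := Nat.card_le_card_of_injective (Subtype.val : S.verts → Fin n)
            Subtype.val_injective
          simpa using this
        omega
      omega
  refine csSup_le' ?_
  rintro c ⟨G, hG, rfl⟩
  exact key G hG
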